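/- Let G=(V,E,w) be an edge-weighted graph with E≠∅ and let d be a positive real. If the density of the whole graph satisfies d(V) ≥ d, then there exists a nonempty subset S ⊆ V such that the induced subgraph G[S] is (⌊⌈d/w_max⌉/2⌋ + 1)-vertex-connected and every vertex of G[S] has weighted degree strictly greater than d in G[S]. -/

import Mathlib

open Finset
open scoped Classical

noncomputable section

variable {V : Type*} [Fintype V] [DecidableEq V]

/-- The set of edges of `G` with both endpoints in `S`, i.e. the edge set `E(S)`
of the induced subgraph `G[S]`. -/
def edgesIn (G : SimpleGraph V) (S : Finset V) : Finset (Sym2 V) :=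
  Finset.univ.filter (fun e => e ∈ G.edgeSet ∧ ∀ v ∈ e, v ∈ S)

/-- `w(S)`: the total weight of the edges of the induced subgraph `G[S]`. -/
def wsum (G : SimpleGraph V) (w : Sym2 V → ℝ) (S : Finset V) : ℝ :=
  ∑ e ∈ edgesIn G S, w e

/-- The density `d(S) = w(S)/|S|` of the induced subgraph `G[S]`. -/
def density (G : SimpleGraph V) (w : Sym2 V → ℝ) (S : Finset V) : ℝ :=
  wsum G w S / S.card

/-- The weighted degree of a vertex `v` in the induced subgraph `G[S]`. -/
def wdeg (G : SimpleGraph V) (w : Sym2 V → ℝ) (S : Finset V) (v : V) : ℝ :=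
  ∑ e ∈ (edgesIn G S).filter (fun e => v ∈ e), w e

/-- `G[S]` is `k`-vertex-connected: it has at least `k+1` vertices, and deleting any set
of fewer than `k` vertices leaves a connected graph. -/
def VertexConnected (G : SimpleGraph V) (S : Finset V) (k : ℕ) : Prop :=
  k + 1 ≤ S.card ∧ ∀ D : Finset V, D ⊆ S → D.card < k →
    (G.induce ((S \ D : Finset V) : Set V)).Connected

variable {G : SimpleGraph V} {w : Sym2 V → ℝ} {S T : Finset V}

lemma mem_edgesIn {e : Sym2 V} : e ∈ edgesIn G S ↔ e ∈ G.edgeSet ∧ ∀ v ∈ e, v ∈ S := by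
  simp [edgesIn]

lemma edgesIn_mono (h : S ⊆ T) : edgesIn G S ⊆ edgesIn G T := by
  intro e he
  rw [mem_edgesIn] at he ⊢
  exact ⟨he.1, fun v hv => h (he.2 v hv)⟩

lemma edgesIn_erase (v : V) :
    edgesIn G (S.erase v) = (edgesIn G S).filter (fun e => v ∉ e) := by
  ext e
  simp only [mem_edgesIn, Finset.mem_filter, Finset.mem_erase]
  constructor
  · rintro ⟨h1, h2⟩
    exact ⟨⟨h1, fun u hu => (h2 u hu).2⟩, fun hv => (h2 v hv).1 rfl⟩
  · rintro ⟨⟨h1, h2⟩, h3⟩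
    exact ⟨h1, fun u hu => ⟨fun huv => h3 (huv ▸ hu), h2 u hu⟩⟩

lemma wsum_erase (v : V) :
    wsum G w (S.erase v) = wsum G w S - wdeg G w S v := by
  rw [wsum, edgesIn_erase, wsum, wdeg, eq_sub_iff_add_eq, add_comm,
    Finset.sum_filter_add_sum_filter_not]

lemma wsum_nonneg (hw : ∀ e ∈ G.edgeSet, 0 < w e) : 0 ≤ wsum G w S :=
  Finset.sum_nonneg fun e he => le_of_lt (hw e (mem_edgesIn.mp he).1)

lemma card_incident_le (v : V) (hv : v ∈ S) :
    ((edgesIn G S).filter (fun e => v ∈ e)).card + 1 ≤ S.card := by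
  have h : ((edgesIn G S).filter (fun e => v ∈ e)).card ≤ (S.erase v).card := by
    apply Finset.card_le_card_of_injOn (fun e => if h : v ∈ e then Sym2.Mem.other h else v)
    · intro e he
      rw [Finset.mem_coe, Finset.mem_filter, mem_edgesIn] at he
      obtain ⟨⟨hes, hend⟩, hve⟩ := he
      beta_reduce
      rw [dif_pos hve]
      exact Finset.mem_erase.mpr ⟨Sym2.other_ne (G.not_isDiag_of_mem_edgeSet hes) hve,
        hend _ (Sym2.other_mem hve)⟩
    · intro e1 h1 e2 h2 heq
      rw [Finset.coe_filter, Set.mem_setOf_eq] at h1 h2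
      simp only [dif_pos h1.2, dif_pos h2.2] at heq
      rw [← Sym2.other_spec h1.2, ← Sym2.other_spec h2.2, heq]
  calc _ ≤ (S.erase v).card + 1 := by omega
  _ = S.card := by rw [Finset.card_erase_of_mem hv]; have := Finset.card_pos.mpr ⟨v, hv⟩; omega

lemma wdeg_le_card_mul {W : ℝ} (hW : ∀ e ∈ edgesIn G Finset.univ, w e ≤ W) (v : V) :
    wdeg G w S v ≤ ((edgesIn G S).filter (fun e => v ∈ e)).card * W := by
  rw [wdeg]
  calc ∑ e ∈ (edgesIn G S).filter (fun e => v ∈ e), w e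
      ≤ ∑ _e ∈ (edgesIn G S).filter (fun e => v ∈ e), W := by
        apply Finset.sum_le_sum
        intro e he
        exact hW e (edgesIn_mono (Finset.subset_univ S) (Finset.mem_filter.mp he).1)
  _ = _ := by rw [Finset.sum_const, nsmul_eq_mul]

lemma handshake : ∑ v ∈ S, wdeg G w S v = 2 * wsum G w S := by
  unfold wdeg wsum
  have : ∀ v, ∑ e ∈ (edgesIn G S).filter (fun e => v ∈ e), w e
      = ∑ e ∈ edgesIn G S, if v ∈ e then w e else 0 := fun v => Finset.sum_filter _ _
  simp_rw [this]
  rw [Finset.sum_comm, Finset.mul_sum]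
  apply Finset.sum_congr rfl
  intro e
  induction e using Sym2.ind with
  | _ a b =>
  intro he
  rw [mem_edgesIn] at he
  have hab : a ≠ b := fun h => G.not_isDiag_of_mem_edgeSet he.1 (h ▸ Sym2.mk_isDiag_iff.mpr rfl)
  have ha : a ∈ S := he.2 a (Sym2.mem_mk_left a b)
  have hb : b ∈ S := he.2 b (Sym2.mem_mk_right a b)
  have : S.filter (fun v => v ∈ s(a, b)) = {a, b} := by
    ext v
    simp only [Finset.mem_filter, Sym2.mem_iff, Finset.mem_insert, Finset.mem_singleton]
    constructor
    · exact fun h => h.2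
    · rintro (rfl | rfl) <;> simp [ha, hb]
  rw [← Finset.sum_filter, this, Finset.sum_pair hab]
  ring

lemma two_mul_wsum_le {W : ℝ} (hWpos : 0 < W) (hW : ∀ e ∈ edgesIn G Finset.univ, w e ≤ W) :
    2 * wsum G w S ≤ S.card * ((S.card : ℝ) - 1) * W := by
  rw [← handshake]
  calc ∑ v ∈ S, wdeg G w S v ≤ ∑ _v ∈ S, ((S.card : ℝ) - 1) * W := by
        apply Finset.sum_le_sum
        intro v hv
        calc wdeg G w S v ≤ ((edgesIn G S).filter (fun e => v ∈ e)).card * W :=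
              wdeg_le_card_mul hW v
        _ ≤ ((S.card : ℝ) - 1) * W := by
            apply mul_le_mul_of_nonneg_right _ hWpos.le
            have := card_incident_le (G := G) v hv
            have h2 : (((edgesIn G S).filter (fun e => v ∈ e)).card + 1 : ℝ) ≤ S.card := by
              exact_mod_cast this
            linarith
  _ = S.card * ((S.card : ℝ) - 1) * W := by rw [Finset.sum_const, nsmul_eq_mul]; ring

lemma incident_card_ge {W : ℝ} (hWpos : 0 < W) (hW : ∀ e ∈ edgesIn G Finset.univ, w e ≤ W)
    {d : ℝ} {v : V} (h : d < wdeg G w S v) :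
    ⌈d / W⌉₊ ≤ ((edgesIn G S).filter (fun e => v ∈ e)).card := by
  rw [Nat.ceil_le, div_le_iff₀ hWpos]
  calc d ≤ wdeg G w S v := h.le
  _ ≤ _ := wdeg_le_card_mul hW v

lemma wsum_split {A B : Finset V} (hw : ∀ e ∈ G.edgeSet, 0 < w e)
    (h : edgesIn G S ⊆ edgesIn G A ∪ edgesIn G B) :
    wsum G w S ≤ wsum G w A + wsum G w B := by
  have h0 : ∀ e ∈ edgesIn G A ∪ edgesIn G B, 0 ≤ w e := by
    intro e he
    rcases Finset.mem_union.mp he with h' | h' <;> exact (hw e (mem_edgesIn.mp h').1).le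
  calc wsum G w S ≤ ∑ e ∈ edgesIn G A ∪ edgesIn G B, w e :=
        Finset.sum_le_sum_of_subset_of_nonneg h (fun e he _ => h0 e he)
  _ ≤ wsum G w A + wsum G w B := by
      rw [wsum, wsum, ← Finset.sum_union_inter]
      have : 0 ≤ ∑ e ∈ edgesIn G A ∩ edgesIn G B, w e :=
        Finset.sum_nonneg fun e he => h0 e (Finset.mem_union_left _ (Finset.mem_inter.mp he).1)
      linarith

lemma mader_aux (G : SimpleGraph V) (w : Sym2 V → ℝ) (hw : ∀ e ∈ G.edgeSet, 0 < w e)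
    (W : ℝ) (hWpos : 0 < W) (hWub : ∀ e ∈ edgesIn G Finset.univ, w e ≤ W)
    (d : ℝ) (hd : 0 < d) :
    ∀ (n : ℕ) (U : Finset V), U.card ≤ n → ⌈d / W⌉₊ + 1 ≤ U.card →
      d * ((U.card : ℝ) - (⌈d / W⌉₊ / 2 + 1 : ℕ) + 1) ≤ wsum G w U →
      ∃ S : Finset V, S ⊆ U ∧ S.Nonempty ∧ VertexConnected G S (⌈d / W⌉₊ / 2 + 1) ∧
        ∀ v ∈ S, d < wdeg G w S v := by
  intro n
  induction n with
  | zero => intro U hn hsize _; omega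
  | succ n ih =>
    intro U hn hsize hwU
    set m : ℕ := ⌈d / W⌉₊ with hm
    set k : ℕ := m / 2 + 1 with hk
    have hm1 : 1 ≤ m := Nat.one_le_ceil_iff.mpr (div_pos hd hWpos)
    have hkm : k ≤ m := by omega
    have hkR : ((k : ℕ) : ℝ) = ((m / 2 : ℕ) : ℝ) + 1 := by push_cast [hk]; ring
    have hhalf : ((m / 2 : ℕ) : ℝ) ≤ (m : ℝ) / 2 := Nat.cast_div_le
    have hmlt : ((m : ℝ) - 1) * W < d := by
      have h1 : (m : ℝ) < d / W + 1 := by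
        rw [hm]; exact Nat.ceil_lt_add_one (div_pos hd hWpos).le
      have : (m : ℝ) - 1 < d / W := by linarith
      calc ((m : ℝ) - 1) * W < (d / W) * W := by
            exact mul_lt_mul_of_pos_right this hWpos
      _ = d := div_mul_cancel₀ d hWpos.ne'
    by_cases hlow : ∃ v ∈ U, wdeg G w U v ≤ d
    · obtain ⟨v, hv, hvd⟩ := hlow
      have hUpos : 1 ≤ U.card := by omega
      have hcerase : (U.erase v).card = U.card - 1 := Finset.card_erase_of_mem hv
      have hceraseR : ((U.erase v).card : ℝ) = (U.card : ℝ) - 1 := by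
        rw [hcerase]; push_cast [Nat.cast_sub hUpos]; ring
      have hwe : wsum G w (U.erase v) = wsum G w U - wdeg G w U v := wsum_erase v
      by_cases hsz : m + 2 ≤ U.card
      · obtain ⟨S, hS1, hS2⟩ := ih (U.erase v) (by omega) (by omega)
          (by rw [hwe, hceraseR]; linarith)
        exact ⟨S, hS1.trans (Finset.erase_subset v U), hS2⟩
      · exfalso
        have hUc : U.card = m + 1 := by omega
        have hUcR : ((U.card : ℕ) : ℝ) = (m : ℝ) + 1 := by rw [hUc]; push_cast; ring
        have hlb : d * ((m : ℝ) - ((m / 2 : ℕ) : ℝ)) ≤ wsum G w (U.erase v) := by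
          rw [hwe]
          have := hwU
          rw [hUcR, hkR] at this
          linarith
        have hub : 2 * wsum G w (U.erase v) ≤ (m : ℝ) * ((m : ℝ) - 1) * W := by
          have h := two_mul_wsum_le (S := U.erase v) hWpos hWub
          rw [hceraseR, hUcR] at h
          calc 2 * wsum G w (U.erase v) ≤ ((m:ℝ) + 1 - 1) * ((m:ℝ) + 1 - 1 - 1) * W := h
          _ = (m : ℝ) * ((m : ℝ) - 1) * W := by ring
        have h3 : 1 ≤ (m : ℝ) - ((m / 2 : ℕ) : ℝ) := by
          have : (m / 2 : ℕ) + 1 ≤ m := by omega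
          have : ((m / 2 : ℕ) : ℝ) + 1 ≤ (m : ℝ) := by exact_mod_cast this
          linarith
        have hm0 : (0:ℝ) ≤ (m : ℝ) - 1 := by
          have : (1:ℝ) ≤ (m:ℝ) := by exact_mod_cast hm1
          linarith
        -- m(m-1)W ≤ 2(m - m/2)(m-1)W < 2(m - m/2) d
        have key1 : (m : ℝ) * ((m : ℝ) - 1) * W ≤
            2 * ((m : ℝ) - ((m / 2 : ℕ) : ℝ)) * (((m : ℝ) - 1) * W) := by
          have hWnn : 0 ≤ ((m:ℝ) - 1) * W := mul_nonneg hm0 hWpos.le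
          nlinarith [hhalf]
        have key2 : 2 * ((m : ℝ) - ((m / 2 : ℕ) : ℝ)) * (((m : ℝ) - 1) * W) <
            2 * ((m : ℝ) - ((m / 2 : ℕ) : ℝ)) * d := by
          apply mul_lt_mul_of_pos_left hmlt
          linarith
        linarith
    · push_neg at hlow
      by_cases hconn : VertexConnected G U k
      · exact ⟨U, Finset.Subset.refl U, Finset.card_pos.mp (by omega), hconn, hlow⟩
      · have hk1U : k + 1 ≤ U.card := by omega
        unfold VertexConnected at hconn
        push_neg at hconn
        obtain ⟨D, hDU, hDk, hnc⟩ := hconn hk1U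
        have hUDcard : (U \ D).card = U.card - D.card := Finset.card_sdiff_of_subset hDU
        have hUDne : (U \ D).Nonempty := Finset.card_pos.mp (by omega)
        obtain ⟨x, hx⟩ := hUDne
        obtain ⟨a, b, hab⟩ : ∃ a b : ((U \ D : Finset V) : Set V),
            ¬ (G.induce ((U \ D : Finset V) : Set V)).Reachable a b := by
          by_contra h
          push_neg at h
          exact hnc ((SimpleGraph.connected_iff _).mpr ⟨h, ⟨⟨x, Finset.mem_coe.mpr hx⟩⟩⟩)
        set GI := G.induce ((U \ D : Finset V) : Set V) with hGI
        set A' : Finset V := (U \ D).filter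
          (fun z => ∃ hz : z ∈ ((U \ D : Finset V) : Set V), GI.Reachable a ⟨z, hz⟩) with hA'
        have hclos : ∀ z y, z ∈ A' → y ∈ U \ D → G.Adj z y → y ∈ A' := by
          intro z y hz hy hadj
          rw [hA', Finset.mem_filter] at hz ⊢
          obtain ⟨hz1, hz2, hr⟩ := hz
          refine ⟨hy, Finset.mem_coe.mpr hy, hr.trans (SimpleGraph.Adj.reachable ?_)⟩
          simpa [hGI, SimpleGraph.comap_adj] using hadj
        have haA' : (a : V) ∈ A' := by
          rw [hA', Finset.mem_filter]
          exact ⟨Finset.mem_coe.mp a.2, a.2, SimpleGraph.Reachable.refl a⟩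
        have hbA' : (b : V) ∉ A' := by
          intro hb
          rw [hA', Finset.mem_filter] at hb
          obtain ⟨_, hz, hr⟩ := hb
          exact hab hr
        set B' : Finset V := (U \ D) \ A' with hB'
        have hbB' : (b : V) ∈ B' := Finset.mem_sdiff.mpr ⟨Finset.mem_coe.mp b.2, hbA'⟩
        set A : Finset V := A' ∪ D with hA
        set B : Finset V := B' ∪ D with hB
        have hA'sub : A' ⊆ U \ D := Finset.filter_subset _ _
        have hB'sub : B' ⊆ U \ D := Finset.sdiff_subset
        have hAsubU : A ⊆ U := Finset.union_subset (hA'sub.trans Finset.sdiff_subset) hDU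
        have hBsubU : B ⊆ U := Finset.union_subset (hB'sub.trans Finset.sdiff_subset) hDU
        have hsplitV : ∀ v ∈ U \ D, v ∈ A' ∨ v ∈ B' := by
          intro v hv
          by_cases h : v ∈ A'
          · exact Or.inl h
          · exact Or.inr (Finset.mem_sdiff.mpr ⟨hv, h⟩)
        have key : ∀ p q : V, G.Adj p q → p ∈ U → q ∈ U →
            (p ∈ A ∧ q ∈ A) ∨ (p ∈ B ∧ q ∈ B) := by
          intro p q hpq hpU hqU
          have hDA : ∀ v ∈ D, v ∈ A := fun v hv => Finset.mem_union_right _ hv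
          have hDB : ∀ v ∈ D, v ∈ B := fun v hv => Finset.mem_union_right _ hv
          have hA'A : ∀ v ∈ A', v ∈ A := fun v hv => Finset.mem_union_left _ hv
          have hB'B : ∀ v ∈ B', v ∈ B := fun v hv => Finset.mem_union_left _ hv
          by_cases hpD : p ∈ D
          · by_cases hqD : q ∈ D
            · exact Or.inl ⟨hDA _ hpD, hDA _ hqD⟩
            · rcases hsplitV q (Finset.mem_sdiff.mpr ⟨hqU, hqD⟩) with h | h
              · exact Or.inl ⟨hDA _ hpD, hA'A _ h⟩
              · exact Or.inr ⟨hDB _ hpD, hB'B _ h⟩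
          · rcases hsplitV p (Finset.mem_sdiff.mpr ⟨hpU, hpD⟩) with hpA | hpB
            · by_cases hqD : q ∈ D
              · exact Or.inl ⟨hA'A _ hpA, hDA _ hqD⟩
              · have : q ∈ A' := hclos p q hpA (Finset.mem_sdiff.mpr ⟨hqU, hqD⟩) hpq
                exact Or.inl ⟨hA'A _ hpA, hA'A _ this⟩
            · by_cases hqD : q ∈ D
              · exact Or.inr ⟨hB'B _ hpB, hDB _ hqD⟩
              · rcases hsplitV q (Finset.mem_sdiff.mpr ⟨hqU, hqD⟩) with hqA | hqB
                · exact absurd (hclos q p hqA (Finset.mem_sdiff.mpr ⟨hpU, hpD⟩) hpq.symm)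
                    (Finset.mem_sdiff.mp hpB).2
                · exact Or.inr ⟨hB'B _ hpB, hB'B _ hqB⟩
        have keyE : ∀ e ∈ edgesIn G U, e ∈ edgesIn G A ∨ e ∈ edgesIn G B := by
          intro e
          induction e using Sym2.ind with
          | _ p q =>
          intro he
          rw [mem_edgesIn] at he
          have hadj : G.Adj p q := he.1
          have hp := he.2 p (Sym2.mem_mk_left p q)
          have hq := he.2 q (Sym2.mem_mk_right p q)
          rcases key p q hadj hp hq with ⟨h1, h2⟩ | ⟨h1, h2⟩
          · exact Or.inl (mem_edgesIn.mpr ⟨he.1,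
              fun v hv => by rcases Sym2.mem_iff.mp hv with rfl | rfl <;> assumption⟩)
          · exact Or.inr (mem_edgesIn.mpr ⟨he.1,
              fun v hv => by rcases Sym2.mem_iff.mp hv with rfl | rfl <;> assumption⟩)
        have hdisjA : Disjoint A' D :=
          Finset.disjoint_of_subset_left hA'sub Finset.sdiff_disjoint
        have hdisjB : Disjoint B' D :=
          Finset.disjoint_of_subset_left hB'sub Finset.sdiff_disjoint
        have hcardA : A.card = A'.card + D.card := Finset.card_union_of_disjoint hdisjA
        have hcardB : B.card = B'.card + D.card := Finset.card_union_of_disjoint hdisjB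
        have hcardA'B' : A'.card + B'.card = (U \ D).card := by
          have h1 : B'.card = (U \ D).card - A'.card := by
            rw [hB']; exact Finset.card_sdiff_of_subset hA'sub
          have h2 : A'.card ≤ (U \ D).card := Finset.card_le_card hA'sub
          omega
        have hUDadd : (U \ D).card + D.card = U.card := Finset.card_sdiff_add_card_eq_card hDU
        have hB'pos : 1 ≤ B'.card := Finset.card_pos.mpr ⟨(b : V), hbB'⟩
        have hA'pos : 1 ≤ A'.card := Finset.card_pos.mpr ⟨(a : V), haA'⟩
        have hAltU : A.card < U.card := by omega
        have hBltU : B.card < U.card := by omega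
        have hsizeA : m + 1 ≤ A.card := by
          have hvA : (a : V) ∈ A := Finset.mem_union_left _ haA'
          have haU : (a : V) ∈ U := (Finset.mem_sdiff.mp (Finset.mem_coe.mp a.2)).1
          have hcard := incident_card_ge hWpos hWub (hlow (a : V) haU)
          have hsub : (edgesIn G U).filter (fun e => (a : V) ∈ e) ⊆
              (edgesIn G A).filter (fun e => (a : V) ∈ e) := by
            intro e he
            rw [Finset.mem_filter] at he ⊢
            refine ⟨?_, he.2⟩
            rcases keyE e he.1 with h | h
            · exact h
            · exfalso
              have hmem := (mem_edgesIn.mp h).2 (a : V) he.2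
              rcases Finset.mem_union.mp hmem with h' | h'
              · exact (Finset.mem_sdiff.mp h').2 haA'
              · exact (Finset.mem_sdiff.mp (Finset.mem_coe.mp a.2)).2 h'
          have h1 : m ≤ ((edgesIn G A).filter (fun e => (a : V) ∈ e)).card :=
            le_trans hcard (Finset.card_le_card hsub)
          have h2 := card_incident_le (G := G) (a : V) hvA
          omega
        have hsizeB : m + 1 ≤ B.card := by
          have hvB : (b : V) ∈ B := Finset.mem_union_left _ hbB'
          have hbU : (b : V) ∈ U := (Finset.mem_sdiff.mp (Finset.mem_coe.mp b.2)).1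
          have hcard := incident_card_ge hWpos hWub (hlow (b : V) hbU)
          have hsub : (edgesIn G U).filter (fun e => (b : V) ∈ e) ⊆
              (edgesIn G B).filter (fun e => (b : V) ∈ e) := by
            intro e he
            rw [Finset.mem_filter] at he ⊢
            refine ⟨?_, he.2⟩
            rcases keyE e he.1 with h | h
            · exfalso
              have hmem := (mem_edgesIn.mp h).2 (b : V) he.2
              rcases Finset.mem_union.mp hmem with h' | h'
              · exact hbA' h'
              · exact (Finset.mem_sdiff.mp (Finset.mem_coe.mp b.2)).2 h'
            · exact h
          have h1 : m ≤ ((edgesIn G B).filter (fun e => (b : V) ∈ e)).card :=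
            le_trans hcard (Finset.card_le_card hsub)
          have h2 := card_incident_le (G := G) (b : V) hvB
          omega
        have hsplitW : wsum G w U ≤ wsum G w A + wsum G w B :=
          wsum_split hw (fun e he => Finset.mem_union.mpr (keyE e he))
        have hDkR : (D.card : ℝ) + 1 ≤ (k : ℝ) := by exact_mod_cast hDk
        have hcards : (A.card : ℝ) + B.card = (U.card : ℝ) + D.card := by
          have h : A.card + B.card = U.card + D.card := by omega
          exact_mod_cast h
        have hor : d * ((A.card : ℝ) - k + 1) ≤ wsum G w A ∨
            d * ((B.card : ℝ) - k + 1) ≤ wsum G w B := by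
          by_contra hcon
          push_neg at hcon
          have hfac : (0:ℝ) ≤ d * ((k : ℝ) - 1 - D.card) :=
            mul_nonneg hd.le (by linarith)
          nlinarith [hwU, hsplitW, hcon.1, hcon.2]
        rcases hor with h | h
        · obtain ⟨S, hS1, hS2⟩ := ih A (by omega) hsizeA h
          exact ⟨S, hS1.trans hAsubU, hS2⟩
        · obtain ⟨S, hS1, hS2⟩ := ih B (by omega) hsizeB h
          exact ⟨S, hS1.trans hBsubU, hS2⟩

/-- Theorem (generalized Mader): if the edge-weighted graph `G` has density at least `d > 0`,
then there is a nonempty `S ⊆ V` such that `G[S]` is `(⌊⌈d/wmax⌉/2⌋ + 1)`-vertex-connected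
and every vertex of `G[S]` has weighted degree greater than `d` in `G[S]`. -/
theorem mader_weighted (G : SimpleGraph V) (w : Sym2 V → ℝ)
    (hE : (edgesIn G Finset.univ).Nonempty)
    (hw : ∀ e ∈ G.edgeSet, 0 < w e)
    (d : ℝ) (hd : 0 < d)
    (hdens : density G w Finset.univ ≥ d) :
    ∃ S : Finset V, S.Nonempty ∧
      VertexConnected G S (⌈d / (edgesIn G Finset.univ).sup' hE w⌉₊ / 2 + 1) ∧
      ∀ v ∈ S, d < wdeg G w S v := by
  set W := (edgesIn G Finset.univ).sup' hE w with hWdef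
  obtain ⟨e₀, he₀⟩ := hE
  have hWpos : 0 < W :=
    lt_of_lt_of_le (hw e₀ (mem_edgesIn.mp he₀).1) (Finset.le_sup' w he₀)
  have hWub : ∀ e ∈ edgesIn G Finset.univ, w e ≤ W := fun e he => Finset.le_sup' w he
  have hne : Nonempty V := ⟨e₀.out.1⟩
  have hn0 : 0 < (Finset.univ : Finset V).card := Finset.card_pos.mpr Finset.univ_nonempty
  set n := (Finset.univ : Finset V).card with hn
  have hnR : (0 : ℝ) < (n : ℝ) := by exact_mod_cast hn0
  have hwV : d * (n : ℝ) ≤ wsum G w Finset.univ := by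
    rw [density, ge_iff_le, le_div_iff₀ hnR] at hdens
    linarith
  set m : ℕ := ⌈d / W⌉₊ with hm
  have hm1 : 1 ≤ m := Nat.one_le_ceil_iff.mpr (div_pos hd hWpos)
  have hmR : (m : ℝ) < d / W + 1 := Nat.ceil_lt_add_one (div_pos hd hWpos).le
  have hsize : m + 1 ≤ n := by
    have h2 := two_mul_wsum_le (G := G) (w := w) (S := Finset.univ) hWpos hWub
    have h3 : 2 * (d * (n : ℝ)) ≤ (n : ℝ) * ((n : ℝ) - 1) * W := by linarith
    have h4 : 2 * d ≤ ((n : ℝ) - 1) * W := by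
      have := le_of_mul_le_mul_right (by linarith : 2 * d * (n:ℝ) ≤ ((n:ℝ) - 1) * W * (n:ℝ)) hnR
      linarith
    have h5 : d / W ≤ ((n : ℝ) - 1) / 2 := by
      rw [div_le_iff₀ hWpos]; linarith
    have h6 : (2 * m : ℝ) < (n : ℝ) + 1 := by push_cast; linarith
    have h7 : 2 * m < n + 1 := by exact_mod_cast h6
    omega
  have hinv : d * ((n : ℝ) - ((m / 2 + 1 : ℕ) : ℝ) + 1) ≤ wsum G w Finset.univ := by
    have hk1 : (1 : ℝ) ≤ ((m / 2 + 1 : ℕ) : ℝ) := by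
      have : (1 : ℕ) ≤ m / 2 + 1 := by omega
      exact_mod_cast this
    have : d * ((n : ℝ) - ((m / 2 + 1 : ℕ) : ℝ) + 1) ≤ d * (n : ℝ) := by
      apply mul_le_mul_of_nonneg_left _ hd.le
      linarith
    linarith
  obtain ⟨S, _, hS⟩ := mader_aux G w hw W hWpos hWub d hd n Finset.univ le_rfl hsize hinv
  exact ⟨S, hS⟩
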